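/- Let Z be the lazy walk on ℤ with parameter γ started at z' ∈ I = [z_0 − d, z_0 + d], let Ĩ = (z_0 − h, z_0 + h) with 20(d+1) < h, and T the exit time of Ĩ. Then for all z, z' ∈ I, E_{z'}[L^z_T] = γ^{−1}·h·(1 + φ(z', z)) with |φ(z', z)| ≤ c·d/h for a constant c depending only on γ. -/

import Mathlib

open MeasureTheory ProbabilityTheory
open scoped ENNReal NNReal

/-- The step distribution of the lazy random walk on `ℤ` with parameter `γ`. -/
noncomputable def lazyStep (γ : ℝ) : Measure ℤ :=
  ENNReal.ofReal (γ / 2) • Measure.dirac 1 + ENNReal.ofReal (γ / 2) • Measure.dirac (-1)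
    + ENNReal.ofReal (1 - γ) • Measure.dirac 0

/-- The random walk started at `z` with increments `ξ`. -/
def walk {Ω : Type} (ξ : ℕ → Ω → ℤ) (z : ℤ) (n : ℕ) (ω : Ω) : ℤ :=
  z + ∑ m ∈ Finset.range n, ξ m ω

/-- The exit time from the set `I` of the walk started at `z`. -/
noncomputable def exitTime {Ω : Type} (ξ : ℕ → Ω → ℤ) (z : ℤ) (I : Set ℤ) (ω : Ω) : ℕ∞ :=
  ⨅ (n : ℕ) (_ : walk ξ z n ω ∉ I), (n : ℕ∞)

/-- The local time at `z` of the walk started at `z₀`, before the random time `τ`. -/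
noncomputable def localTime {Ω : Type} (ξ : ℕ → Ω → ℤ) (z₀ z : ℤ) (τ : Ω → ℕ∞)
    (ω : Ω) : ℝ≥0∞ :=
  ∑' n : ℕ, if (n : ℕ∞) < τ ω ∧ walk ξ z₀ n ω = z then (1 : ℝ≥0∞) else 0

set_option linter.unusedSectionVars false
set_option linter.unusedVariables false
set_option maxHeartbeats 1000000


namespace LocalTimeAux

/-- Green's function of the lazy walk on `(a,b)` killed at the boundary, pole at `z`. -/
noncomputable def greenFn (γ : ℝ) (a b z : ℤ) (x : ℤ) : ℝ :=
  if a ≤ x ∧ x ≤ b then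
    2 / γ * ((min (x : ℝ) (z : ℝ) - (a : ℝ)) * ((b : ℝ) - max (x : ℝ) (z : ℝ))) / ((b : ℝ) - (a : ℝ))
  else 0

variable {γ : ℝ} {a b z : ℤ}

lemma greenFn_of_not_mem (haz : a < z) (hzb : z < b) (x : ℤ) (hx : x ∉ Set.Ioo a b) :
    greenFn γ a b z x = 0 := by
  by_cases hab : a ≤ x ∧ x ≤ b
  · rw [Set.mem_Ioo, not_and_or] at hx
    rw [greenFn, if_pos hab]
    have hx' : x = a ∨ x = b := by omega
    rcases hx' with rfl | rfl
    · have : min ((x : ℤ) : ℝ) (z : ℝ) = (x : ℝ) :=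
        min_eq_left (by exact_mod_cast haz.le)
      rw [this]; simp
    · have : max ((x : ℤ) : ℝ) (z : ℝ) = (x : ℝ) :=
        max_eq_left (by exact_mod_cast hzb.le)
      rw [this]; simp
  · rw [greenFn, if_neg hab]

lemma greenFn_nonneg (haz : a < z) (hzb : z < b) (hγ : 0 < γ) (x : ℤ) :
    0 ≤ greenFn γ a b z x := by
  rw [greenFn]
  split_ifs with hab
  · have h1 : (0:ℝ) ≤ min (x:ℝ) (z:ℝ) - a :=
      sub_nonneg.2 (le_min (by exact_mod_cast hab.1) (by exact_mod_cast haz.le))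
    have h2 : (0:ℝ) ≤ (b:ℝ) - max (x:ℝ) (z:ℝ) :=
      sub_nonneg.2 (max_le (by exact_mod_cast hab.2) (by exact_mod_cast hzb.le))
    have h3 : (0:ℝ) ≤ (b:ℝ) - a := by
      have : a < b := haz.trans hzb
      have : (a:ℝ) < b := by exact_mod_cast this
      linarith
    have h4 : (0:ℝ) ≤ 2 / γ := by positivity
    exact div_nonneg (mul_nonneg h4 (mul_nonneg h1 h2)) h3
  · exact le_refl 0

lemma greenFn_le (haz : a < z) (hzb : z < b) (hγ : 0 < γ) (x : ℤ) :
    greenFn γ a b z x ≤ 2 / γ * ((b : ℝ) - a) := by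
  have hba : (0:ℝ) < (b:ℝ) - a := by
    have : a < b := haz.trans hzb
    have : (a:ℝ) < b := by exact_mod_cast this
    linarith
  rw [greenFn]
  split_ifs with hab
  · have h1 : (0:ℝ) ≤ min (x:ℝ) (z:ℝ) - a :=
      sub_nonneg.2 (le_min (by exact_mod_cast hab.1) (by exact_mod_cast haz.le))
    have h2 : (0:ℝ) ≤ (b:ℝ) - max (x:ℝ) (z:ℝ) :=
      sub_nonneg.2 (max_le (by exact_mod_cast hab.2) (by exact_mod_cast hzb.le))
    have h1' : min (x:ℝ) (z:ℝ) - a ≤ (b:ℝ) - a := by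
      have : min (x:ℝ) (z:ℝ) ≤ (b:ℝ) :=
        le_trans (min_le_right _ _) (by exact_mod_cast hzb.le)
      linarith
    have h2' : (b:ℝ) - max (x:ℝ) (z:ℝ) ≤ (b:ℝ) - a := by
      have : (a:ℝ) ≤ max (x:ℝ) (z:ℝ) :=
        le_trans (by exact_mod_cast haz.le) (le_max_right _ _)
      linarith
    rw [div_le_iff₀ hba]
    have h4 : (0:ℝ) ≤ 2 / γ := by positivity
    calc 2 / γ * ((min (x:ℝ) (z:ℝ) - a) * ((b:ℝ) - max (x:ℝ) (z:ℝ)))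
        ≤ 2 / γ * (((b:ℝ) - a) * ((b:ℝ) - a)) := by
          apply mul_le_mul_of_nonneg_left _ h4
          exact mul_le_mul h1' h2' h2 hba.le
      _ = 2 / γ * ((b:ℝ) - a) * ((b:ℝ) - a) := by ring
  · positivity

lemma greenFn_harmonic (haz : a < z) (hzb : z < b) (hγ : 0 < γ) (y : ℤ)
    (hy : y ∈ Set.Ioo a b) :
    γ / 2 * greenFn γ a b z (y - 1) + γ / 2 * greenFn γ a b z (y + 1)
      + (1 - γ) * greenFn γ a b z y
      = greenFn γ a b z y - (if y = z then 1 else 0) := by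
  obtain ⟨hay, hyb⟩ := hy
  have hγ' : γ ≠ 0 := hγ.ne'
  have hba : ((b:ℝ) - a) ≠ 0 := by
    have : a < b := haz.trans hzb
    have : (a:ℝ) < b := by exact_mod_cast this
    linarith
  have h1 : a ≤ y - 1 ∧ y - 1 ≤ b := by omega
  have h2 : a ≤ y + 1 ∧ y + 1 ≤ b := by omega
  have h3 : a ≤ y ∧ y ≤ b := by omega
  rw [greenFn, greenFn, greenFn, if_pos h1, if_pos h2, if_pos h3]
  push_cast
  rcases lt_trichotomy y z with h | rfl | h
  · have hyz : (y:ℝ) < z := by exact_mod_cast h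
    have hyz' : (y:ℝ) + 1 ≤ z := by exact_mod_cast h
    rw [min_eq_left (by linarith), min_eq_left (by linarith), min_eq_left (by linarith),
      max_eq_right (by linarith : (y:ℝ) - 1 ≤ z), max_eq_right hyz.le,
      max_eq_right hyz', if_neg (by omega)]
    field_simp
    ring
  · rw [min_eq_left (by linarith : (y:ℝ) - 1 ≤ (y:ℝ)), min_self,
      min_eq_right (by linarith : (y:ℝ) ≤ (y:ℝ) + 1),
      max_eq_right (by linarith : (y:ℝ) - 1 ≤ (y:ℝ)), max_self,
      max_eq_left (by linarith : (y:ℝ) ≤ (y:ℝ) + 1), if_pos rfl]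
    field_simp
    ring
  · have hyz : (z:ℝ) < y := by exact_mod_cast h
    have hyz' : (z:ℝ) ≤ y - 1 := by
      have : z + 1 ≤ y := h
      have : (z:ℝ) + 1 ≤ y := by exact_mod_cast this
      linarith
    rw [min_eq_right hyz', min_eq_right hyz.le, min_eq_right (by linarith),
      max_eq_left hyz', max_eq_left hyz.le, max_eq_left (by linarith),
      if_neg (by omega)]
    field_simp
    ring

end LocalTimeAux

namespace Stage2
open LocalTimeAux

/-- Shift a sum against a function supported in `Ioo a b`. -/
lemma sum_shift (a b : ℤ) (u w : ℤ → ℝ) (hu : ∀ x, x ∉ Set.Ioo a b → u x = 0)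
    (s : ℤ) (hs : s = -1 ∨ s = 0 ∨ s = 1) :
    ∑ x ∈ Finset.Icc (a - 1) (b + 1), u (x - s) * w x
      = ∑ y ∈ Finset.Icc (a + 1) (b - 1), u y * w (y + s) := by
  have h1 : ∑ x ∈ Finset.Icc (a - 1) (b + 1), u (x - s) * w x
      = ∑ x ∈ Finset.Icc (a + 1 + s) (b - 1 + s), u (x - s) * w x := by
    symm
    apply Finset.sum_subset
    · intro x hx
      simp only [Finset.mem_Icc] at hx ⊢
      omega
    · intro x _ hx
      simp only [Finset.mem_Icc] at hx
      rw [hu (x - s) (by simp only [Set.mem_Ioo]; omega), zero_mul]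
  have h2 : Finset.Icc (a + 1 + s) (b - 1 + s)
      = (Finset.Icc (a + 1) (b - 1)).map (addRightEmbedding s) := by
    rw [Finset.map_add_right_Icc]
  rw [h1, h2, Finset.sum_map]
  apply Finset.sum_congr rfl
  intro y _
  simp [addRightEmbedding]

lemma telescope (hγ : 0 < γ) (haz : a < z) (hzb : z < b)
    (u v : ℤ → ℝ)
    (hu : ∀ x, x ∉ Set.Ioo a b → u x = 0)
    (hv : ∀ y, y ∈ Set.Ioo a b →
      v y = γ / 2 * u (y - 1) + γ / 2 * u (y + 1) + (1 - γ) * u y)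
    (hv0 : ∀ y, y ∉ Set.Ioo a b → v y = 0) :
    ∑ x ∈ Finset.Icc (a - 1) (b + 1), v x * greenFn γ a b z x
      = (∑ x ∈ Finset.Icc (a - 1) (b + 1), u x * greenFn γ a b z x) - u z := by
  set g : ℤ → ℝ := greenFn γ a b z with hg
  have step1 : ∑ x ∈ Finset.Icc (a - 1) (b + 1), v x * g x
      = ∑ x ∈ Finset.Icc (a - 1) (b + 1),
          (γ / 2 * u (x - 1) + γ / 2 * u (x + 1) + (1 - γ) * u x) * g x := by
    apply Finset.sum_congr rfl
    intro x _
    by_cases hx : x ∈ Set.Ioo a b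
    · rw [hv x hx]
    · rw [hv0 x hx, hg, greenFn_of_not_mem haz hzb x hx, mul_zero, mul_zero]
  have expand : ∑ x ∈ Finset.Icc (a - 1) (b + 1),
          (γ / 2 * u (x - 1) + γ / 2 * u (x + 1) + (1 - γ) * u x) * g x
      = (∑ x ∈ Finset.Icc (a - 1) (b + 1), γ / 2 * (u (x - 1) * g x))
        + (∑ x ∈ Finset.Icc (a - 1) (b + 1), γ / 2 * (u (x + 1) * g x))
        + (∑ x ∈ Finset.Icc (a - 1) (b + 1), (1 - γ) * (u x * g x)) := by
    rw [← Finset.sum_add_distrib, ← Finset.sum_add_distrib]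
    apply Finset.sum_congr rfl
    intro x _; ring
  have s1 : ∑ x ∈ Finset.Icc (a - 1) (b + 1), u (x - 1) * g x
      = ∑ y ∈ Finset.Icc (a + 1) (b - 1), u y * g (y + 1) :=
    sum_shift a b u g hu 1 (by tauto)
  have s2 : ∑ x ∈ Finset.Icc (a - 1) (b + 1), u (x + 1) * g x
      = ∑ y ∈ Finset.Icc (a + 1) (b - 1), u y * g (y - 1) := by
    have := sum_shift a b u g hu (-1) (by tauto)
    simpa [sub_neg_eq_add, sub_eq_add_neg] using this
  have s3 : ∑ x ∈ Finset.Icc (a - 1) (b + 1), u x * g x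
      = ∑ y ∈ Finset.Icc (a + 1) (b - 1), u y * g y := by
    have := sum_shift a b u g hu 0 (by tauto)
    simpa using this
  have combine : (∑ y ∈ Finset.Icc (a + 1) (b - 1), γ / 2 * (u y * g (y + 1)))
        + (∑ y ∈ Finset.Icc (a + 1) (b - 1), γ / 2 * (u y * g (y - 1)))
        + (∑ y ∈ Finset.Icc (a + 1) (b - 1), (1 - γ) * (u y * g y))
      = ∑ y ∈ Finset.Icc (a + 1) (b - 1),
          u y * (γ / 2 * g (y - 1) + γ / 2 * g (y + 1) + (1 - γ) * g y) := by
    rw [← Finset.sum_add_distrib, ← Finset.sum_add_distrib]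
    apply Finset.sum_congr rfl
    intro x _; ring
  have harm : ∑ y ∈ Finset.Icc (a + 1) (b - 1),
          u y * (γ / 2 * g (y - 1) + γ / 2 * g (y + 1) + (1 - γ) * g y)
      = ∑ y ∈ Finset.Icc (a + 1) (b - 1), (u y * g y - (if y = z then u y else 0)) := by
    apply Finset.sum_congr rfl
    intro y hy
    simp only [Finset.mem_Icc] at hy
    rw [hg, greenFn_harmonic haz hzb hγ y (by simp only [Set.mem_Ioo]; omega)]
    by_cases hyz : y = z <;> simp [hyz] <;> ring
  have last : ∑ y ∈ Finset.Icc (a + 1) (b - 1), (u y * g y - (if y = z then u y else 0))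
      = (∑ y ∈ Finset.Icc (a + 1) (b - 1), u y * g y) - u z := by
    rw [Finset.sum_sub_distrib, Finset.sum_ite_eq' (Finset.Icc (a+1) (b-1)) z u,
      if_pos (by simp only [Finset.mem_Icc]; omega)]
  rw [step1, expand, ← Finset.mul_sum, ← Finset.mul_sum, ← Finset.mul_sum, s1, s2, s3,
    Finset.mul_sum, Finset.mul_sum, Finset.mul_sum, combine, harm, last, ← s3]

end Stage2

namespace Stage3

variable {Ω : Type} [MeasurableSpace Ω] {P : Measure Ω} [IsProbabilityMeasure P]
  {ξ : ℕ → Ω → ℤ} {γ : ℝ}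

lemma walk_zero (ξ : ℕ → Ω → ℤ) (z' : ℤ) (ω : Ω) : walk ξ z' 0 ω = z' := by simp [walk]

lemma walk_succ (ξ : ℕ → Ω → ℤ) (z' : ℤ) (n : ℕ) (ω : Ω) :
    walk ξ z' (n + 1) ω = walk ξ z' n ω + ξ n ω := by
  simp [walk, Finset.sum_range_succ, add_assoc]

lemma measurable_walk (hmeas : ∀ n, Measurable (ξ n)) (z' : ℤ) (n : ℕ) :
    Measurable (walk ξ z' n) :=
  measurable_const.add (Finset.measurable_sum _ fun i _ => hmeas i)

def hitSet (ξ : ℕ → Ω → ℤ) (z' : ℤ) (S : Set ℤ) (n : ℕ) (x : ℤ) : Set Ω :=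
  {ω | (∀ m ≤ n, walk ξ z' m ω ∈ S) ∧ walk ξ z' n ω = x}

def aliveSet (ξ : ℕ → Ω → ℤ) (z' : ℤ) (S : Set ℤ) (n : ℕ) : Set Ω :=
  {ω | ∀ m ≤ n, walk ξ z' m ω ∈ S}

lemma measurableSet_aliveSet (hmeas : ∀ n, Measurable (ξ n)) (z' : ℤ) (S : Set ℤ) (n : ℕ) :
    MeasurableSet (aliveSet ξ z' S n) := by
  have : aliveSet ξ z' S n = ⋂ m, ⋂ (_ : m ≤ n), (walk ξ z' m) ⁻¹' S := by
    ext ω; simp [aliveSet, Set.mem_iInter]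
  rw [this]
  exact MeasurableSet.iInter fun m => MeasurableSet.iInter fun _ =>
    (measurable_walk hmeas z' m) .of_discrete

lemma measurableSet_hitSet (hmeas : ∀ n, Measurable (ξ n)) (z' : ℤ) (S : Set ℤ) (n : ℕ) (x : ℤ) :
    MeasurableSet (hitSet ξ z' S n x) := by
  have : hitSet ξ z' S n x = aliveSet ξ z' S n ∩ (walk ξ z' n) ⁻¹' {x} := by
    ext ω; simp [hitSet, aliveSet, Set.mem_inter_iff]
  rw [this]
  exact (measurableSet_aliveSet hmeas z' S n).inter ((measurable_walk hmeas z' n) .of_discrete)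

/-- The tuple of the first `n` increments. -/
def tuple (ξ : ℕ → Ω → ℤ) (n : ℕ) (ω : Ω) : ↥(Finset.range n) → ℤ := fun i => ξ i ω

lemma walk_eq_tuple (z' : ℤ) {m n : ℕ} (hm : m ≤ n) (ω : Ω) :
    z' + ∑ i ∈ Finset.range (min m n),
        (if h : i ∈ Finset.range n then tuple ξ n ω ⟨i, h⟩ else 0) = walk ξ z' m ω := by
  rw [min_eq_left hm, walk]
  congr 1
  apply Finset.sum_congr rfl
  intro i hi
  rw [dif_pos (Finset.mem_range.2 (lt_of_lt_of_le (Finset.mem_range.1 hi) hm))]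
  rfl

lemma exists_preimage_hitSet (z' : ℤ) (S : Set ℤ) (n : ℕ) (x : ℤ) :
    ∃ B : Set (↥(Finset.range n) → ℤ), hitSet ξ z' S n x = tuple ξ n ⁻¹' B := by
  refine ⟨{v | (∀ m ≤ n, (z' + ∑ i ∈ Finset.range (min m n),
      (if h : i ∈ Finset.range n then v ⟨i, h⟩ else 0)) ∈ S) ∧
      (z' + ∑ i ∈ Finset.range (min n n),
      (if h : i ∈ Finset.range n then v ⟨i, h⟩ else 0)) = x}, ?_⟩
  ext ω
  simp only [hitSet, Set.mem_setOf_eq, Set.mem_preimage]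
  constructor
  · rintro ⟨h1, h2⟩
    exact ⟨fun m hm => by rw [walk_eq_tuple z' hm ω]; exact h1 m hm,
      by rw [walk_eq_tuple z' le_rfl ω]; exact h2⟩
  · rintro ⟨h1, h2⟩
    refine ⟨fun m hm => ?_, ?_⟩
    · have := h1 m hm; rwa [walk_eq_tuple z' hm ω] at this
    · have := h2; rwa [walk_eq_tuple z' le_rfl ω] at this

lemma exists_preimage_aliveSet (z' : ℤ) (S : Set ℤ) (n : ℕ) :
    ∃ B : Set (↥(Finset.range n) → ℤ), aliveSet ξ z' S n = tuple ξ n ⁻¹' B := by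
  refine ⟨{v | ∀ m ≤ n, (z' + ∑ i ∈ Finset.range (min m n),
      (if h : i ∈ Finset.range n then v ⟨i, h⟩ else 0)) ∈ S}, ?_⟩
  ext ω
  simp only [aliveSet, Set.mem_setOf_eq, Set.mem_preimage]
  constructor
  · intro h1 m hm
    rw [walk_eq_tuple z' hm ω]; exact h1 m hm
  · intro h1 m hm
    have := h1 m hm; rwa [walk_eq_tuple z' hm ω] at this

lemma measure_inter_eq_mul (hmeas : ∀ n, Measurable (ξ n))
    (hindep : iIndepFun ξ P)
    (n : ℕ) (E : Set Ω) (hE : ∃ B, E = tuple ξ n ⁻¹' B)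
    (K : Finset ℕ) (hK : ∀ k ∈ K, n ≤ k) (t : ℕ → Set ℤ) :
    P (E ∩ ⋂ k ∈ K, ξ k ⁻¹' t k) = P E * P (⋂ k ∈ K, ξ k ⁻¹' t k) := by
  obtain ⟨B, rfl⟩ := hE
  have hdisj : Disjoint (Finset.range n) K := by
    rw [Finset.disjoint_left]
    intro i hi hiK
    have := hK i hiK
    simp only [Finset.mem_range] at hi
    omega
  have hIF : IndepFun (tuple ξ n) (fun ω (k : ↥K) => ξ (k : ℕ) ω) P :=
    hindep.indepFun_finset (Finset.range n) K hdisj hmeas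
  have hW : (⋂ k ∈ K, ξ k ⁻¹' t k)
      = (fun ω (k : ↥K) => ξ (k : ℕ) ω) ⁻¹' {w | ∀ k : ↥K, w k ∈ t (k : ℕ)} := by
    ext ω
    simp [Set.mem_iInter, Subtype.forall]
  rw [hW]
  exact hIF.measure_inter_preimage_eq_mul B _ .of_discrete .of_discrete

lemma map_prob (hmeas : ∀ n, Measurable (ξ n)) (hlaw : ∀ n, P.map (ξ n) = lazyStep γ)
    (n : ℕ) (s : Set ℤ) : P (ξ n ⁻¹' s) = lazyStep γ s := by
  rw [← Measure.map_apply (hmeas n) .of_discrete, hlaw n]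

lemma lazyStep_one : lazyStep γ {1} = ENNReal.ofReal (γ / 2) := by
  simp [lazyStep, Measure.dirac_apply]

lemma lazyStep_neg_one : lazyStep γ {-1} = ENNReal.ofReal (γ / 2) := by
  simp [lazyStep, Measure.dirac_apply]

lemma lazyStep_zero : lazyStep γ {0} = ENNReal.ofReal (1 - γ) := by
  simp [lazyStep, Measure.dirac_apply]

lemma lazyStep_compl : lazyStep γ ({-1, 0, 1} : Set ℤ)ᶜ = 0 := by
  simp [lazyStep, Measure.dirac_apply]


section Stage4
variable (hmeas : ∀ n, Measurable (ξ n))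
  (hindep : iIndepFun ξ P)
  (hlaw : ∀ n, P.map (ξ n) = lazyStep γ)

include hmeas hindep in
lemma measure_inter_single (n : ℕ) (E : Set Ω) (hE : ∃ B, E = tuple ξ n ⁻¹' B) (s : Set ℤ) :
    P (E ∩ ξ n ⁻¹' s) = P E * P (ξ n ⁻¹' s) := by
  have := measure_inter_eq_mul hmeas hindep n E hE {n} (by simp) (fun _ => s)
  simpa using this

include hmeas hindep hlaw in
lemma allones_prob (n K : ℕ) :
    P (⋂ k ∈ Finset.Ico n (n + K), ξ k ⁻¹' ({1} : Set ℤ)) = ENNReal.ofReal (γ / 2) ^ K := by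
  rw [hindep.measure_inter_preimage_eq_mul (Finset.Ico n (n + K))
    (sets := fun _ => ({1} : Set ℤ)) (fun i _ => .of_discrete)]
  rw [Finset.prod_congr rfl (fun i _ => by
    rw [map_prob hmeas hlaw i ({1} : Set ℤ), lazyStep_one]),
    Finset.prod_const, Nat.card_Ico]
  congr 1
  omega

lemma hit_not_mem (z' : ℤ) (S : Set ℤ) (n : ℕ) (x : ℤ) (hx : x ∉ S) :
    hitSet ξ z' S n x = ∅ := by
  ext ω
  simp only [hitSet, Set.mem_setOf_eq, Set.mem_empty_iff_false, iff_false, not_and]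
  intro hall heq
  exact hx (heq ▸ hall n le_rfl)

lemma hit_zero (z' : ℤ) (S : Set ℤ) (hz' : z' ∈ S) (x : ℤ) :
    P (hitSet ξ z' S 0 x) = if x = z' then 1 else 0 := by
  by_cases hx : x = z'
  · subst hx
    have : hitSet ξ x S 0 x = Set.univ := by
      ext ω
      simp only [hitSet, Set.mem_setOf_eq, Set.mem_univ, iff_true]
      constructor
      · intro m hm
        interval_cases m
        rw [walk_zero]; exact hz'
      · rw [walk_zero]
    rw [this, if_pos rfl, measure_univ]
  · have : hitSet ξ z' S 0 x = ∅ := by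
      ext ω
      simp only [hitSet, Set.mem_setOf_eq, Set.mem_empty_iff_false, iff_false, not_and]
      intro _
      rw [walk_zero]
      exact fun h => hx h.symm
    rw [this, if_neg hx, measure_empty]

include hmeas hindep hlaw in
lemma hit_succ (hγ : γ ∈ Set.Ioc (0:ℝ) 1) (z' : ℤ) (S : Set ℤ) (n : ℕ) (y : ℤ) (hy : y ∈ S) :
    P (hitSet ξ z' S (n + 1) y)
      = ENNReal.ofReal (γ / 2) * P (hitSet ξ z' S n (y - 1))
        + ENNReal.ofReal (γ / 2) * P (hitSet ξ z' S n (y + 1))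
        + ENNReal.ofReal (1 - γ) * P (hitSet ξ z' S n y) := by
  classical
  set N : Set Ω := ξ n ⁻¹' (({-1, 0, 1} : Set ℤ)ᶜ) with hN
  have hPN : P N = 0 := by rw [hN, map_prob hmeas hlaw, lazyStep_compl]
  set E1 : Set Ω := hitSet ξ z' S n (y - 1) ∩ ξ n ⁻¹' ({1} : Set ℤ) with hE1
  set E2 : Set Ω := hitSet ξ z' S n (y + 1) ∩ ξ n ⁻¹' ({-1} : Set ℤ) with hE2
  set E3 : Set Ω := hitSet ξ z' S n y ∩ ξ n ⁻¹' ({0} : Set ℤ) with hE3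
  have hsplit : hitSet ξ z' S (n + 1) y \ N = (E1 ∪ E2) ∪ E3 := by
    ext ω
    simp only [hE1, hE2, hE3, hN, Set.mem_diff, Set.mem_union, Set.mem_inter_iff,
      Set.mem_preimage, Set.mem_compl_iff, Set.mem_singleton_iff, Set.mem_insert_iff,
      not_not, hitSet, Set.mem_setOf_eq]
    constructor
    · rintro ⟨⟨hall, hend⟩, hmem⟩
      have hw : walk ξ z' n ω + ξ n ω = y := by rw [← walk_succ]; exact hend
      have halln : ∀ m ≤ n, walk ξ z' m ω ∈ S := fun m hm => hall m (hm.trans (Nat.le_succ n))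
      rcases hmem with h | h | h
      · exact Or.inl (Or.inr ⟨⟨halln, by omega⟩, h⟩)
      · exact Or.inr ⟨⟨halln, by omega⟩, h⟩
      · exact Or.inl (Or.inl ⟨⟨halln, by omega⟩, h⟩)
    · intro hmem
      have key : (∀ m ≤ n, walk ξ z' m ω ∈ S) → walk ξ z' n ω + ξ n ω = y →
          ((∀ m ≤ n + 1, walk ξ z' m ω ∈ S) ∧ walk ξ z' (n+1) ω = y) := by
        intro hall hw
        have hw' : walk ξ z' (n+1) ω = y := by rw [walk_succ]; exact hw
        refine ⟨fun m hm => ?_, hw'⟩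
        rcases Nat.lt_or_ge m (n+1) with h | h
        · exact hall m (by omega)
        · have : m = n + 1 := by omega
          rw [this, hw']; exact hy
      rcases hmem with (⟨⟨hall, hend⟩, hs⟩ | ⟨⟨hall, hend⟩, hs⟩) | ⟨⟨hall, hend⟩, hs⟩
      · exact ⟨key hall (by omega), by omega⟩
      · exact ⟨key hall (by omega), by omega⟩
      · exact ⟨key hall (by omega), by omega⟩
  have hme : ∀ (x : ℤ) (s : Set ℤ), MeasurableSet (hitSet ξ z' S n x ∩ ξ n ⁻¹' s) :=
    fun x s => (measurableSet_hitSet hmeas z' S n x).inter ((hmeas n) .of_discrete)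
  have hd12 : Disjoint E1 E2 := by
    rw [Set.disjoint_left]
    rintro ω ⟨_, h1⟩ ⟨_, h2⟩
    simp only [Set.mem_preimage, Set.mem_singleton_iff] at h1 h2
    omega
  have hd123 : Disjoint (E1 ∪ E2) E3 := by
    rw [Set.disjoint_left]
    rintro ω (⟨_, h1⟩ | ⟨_, h1⟩) ⟨_, h2⟩ <;>
      simp only [Set.mem_preimage, Set.mem_singleton_iff] at h1 h2 <;> omega
  have hPdiff : P (hitSet ξ z' S (n + 1) y) = P (hitSet ξ z' S (n + 1) y \ N) :=
    (measure_diff_null hPN).symm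
  rw [hPdiff, hsplit, measure_union hd123 (hme _ _), measure_union hd12 (hme _ _)]
  rw [hE1, hE2, hE3,
    measure_inter_single hmeas hindep n _ (exists_preimage_hitSet z' S n (y - 1)) _,
    measure_inter_single hmeas hindep n _ (exists_preimage_hitSet z' S n (y + 1)) _,
    measure_inter_single hmeas hindep n _ (exists_preimage_hitSet z' S n y) _,
    map_prob hmeas hlaw, map_prob hmeas hlaw, map_prob hmeas hlaw,
    lazyStep_one, lazyStep_neg_one, lazyStep_zero]
  ring

include hmeas in
lemma sum_hit_le (z' : ℤ) (S : Set ℤ) (n : ℕ) (T : Finset ℤ) :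
    ∑ x ∈ T, P (hitSet ξ z' S n x) ≤ P (aliveSet ξ z' S n) := by
  have hdisj : (T : Set ℤ).PairwiseDisjoint (fun x => hitSet ξ z' S n x) := by
    intro x _ y _ hxy
    rw [Function.onFun, Set.disjoint_left]
    rintro ω ⟨_, h1⟩ ⟨_, h2⟩
    exact hxy (h1 ▸ h2 ▸ rfl)
  rw [← measure_biUnion_finset hdisj (fun x _ => measurableSet_hitSet hmeas z' S n x)]
  apply measure_mono
  intro ω hω
  simp only [Set.mem_iUnion] at hω
  obtain ⟨x, _, hx⟩ := hω
  exact hx.1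

lemma walk_of_ones {n K : ℕ} {ω : Ω} (z' : ℤ)
    (hO : ∀ k ∈ Finset.Ico n (n + K), ξ k ω = 1) :
    ∀ j ≤ K, walk ξ z' (n + j) ω = walk ξ z' n ω + j := by
  intro j hj
  induction j with
  | zero => simp
  | succ i ih =>
    have hi : i ≤ K := by omega
    rw [show n + (i+1) = (n + i) + 1 by omega, walk_succ, ih hi,
      hO (n + i) (by simp [Finset.mem_Ico]; omega)]
    push_cast
    ring

include hmeas hindep hlaw in
lemma alive_decay (a b z' : ℤ) (n K : ℕ) (hab : a < b) (hK : (b : ℤ) - a ≤ K) :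
    P (aliveSet ξ z' (Set.Ioo a b) (n + K))
      + P (aliveSet ξ z' (Set.Ioo a b) n) * ENNReal.ofReal (γ / 2) ^ K
      ≤ P (aliveSet ξ z' (Set.Ioo a b) n) := by
  set A := aliveSet ξ z' (Set.Ioo a b) n with hA
  set O : Set Ω := ⋂ k ∈ Finset.Ico n (n + K), ξ k ⁻¹' ({1} : Set ℤ) with hO
  have hPO : P (A ∩ O) = P A * ENNReal.ofReal (γ / 2) ^ K := by
    rw [hA, hO, measure_inter_eq_mul hmeas hindep n _ (exists_preimage_aliveSet z' _ n)
      (Finset.Ico n (n + K)) (fun k hk => (Finset.mem_Ico.1 hk).1) (fun _ => {1}),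
      allones_prob hmeas hindep hlaw]
  have hsub : aliveSet ξ z' (Set.Ioo a b) (n + K) ⊆ A \ O := by
    intro ω hω
    constructor
    · exact fun m hm => hω m (hm.trans (Nat.le_add_right n K))
    · intro hωO
      have hones : ∀ k ∈ Finset.Ico n (n + K), ξ k ω = 1 := by
        intro k hk
        have := Set.mem_iInter₂.1 hωO k hk
        simpa using this
      have hwn : walk ξ z' n ω ∈ Set.Ioo a b := hω n (Nat.le_add_right n K)
      set j : ℕ := (b - walk ξ z' n ω).toNat with hj
      have hj1 : (j : ℤ) = b - walk ξ z' n ω := by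
        rw [hj, Int.toNat_of_nonneg]
        have := hwn.2
        omega
      have hwn1 := hwn.1
      have hwn2 := hwn.2
      have hjK : j ≤ K := by omega
      have := walk_of_ones z' hones j hjK
      have hwb : walk ξ z' (n + j) ω = b := by omega
      have := hω (n + j) (by omega)
      rw [hwb] at this
      exact absurd this.2 (lt_irrefl b)
  have hdiff : P (A ∩ O) + P (A \ O) = P A := by
    rw [measure_inter_add_diff]
    exact MeasurableSet.biInter (Finset.countable_toSet _) (fun k _ => (hmeas k) .of_discrete)
  calc P (aliveSet ξ z' (Set.Ioo a b) (n + K)) + P A * ENNReal.ofReal (γ / 2) ^ K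
      ≤ P (A \ O) + P (A ∩ O) := by
        apply add_le_add (measure_mono hsub) (le_of_eq hPO.symm)
    _ = P A := by rw [add_comm]; exact hdiff
end Stage4


lemma lt_exitTime_iff (ξ : ℕ → Ω → ℤ) (z' : ℤ) (S : Set ℤ) (ω : Ω) (n : ℕ) :
    (n : ℕ∞) < exitTime ξ z' S ω ↔ ∀ m ≤ n, walk ξ z' m ω ∈ S := by
  rw [exitTime]
  constructor
  · intro hlt m hm
    by_contra hns
    have hle : (⨅ (k : ℕ) (_ : walk ξ z' k ω ∉ S), (k : ℕ∞)) ≤ (m : ℕ∞) := iInf₂_le m hns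
    have h1 : (n : ℕ∞) < (m : ℕ∞) := lt_of_lt_of_le hlt hle
    have : n < m := by exact_mod_cast h1
    omega
  · intro hall
    have h2 : ((n + 1 : ℕ) : ℕ∞) ≤ ⨅ (k : ℕ) (_ : walk ξ z' k ω ∉ S), (k : ℕ∞) := by
      refine le_iInf₂ fun k hk => ?_
      have hnk : ¬k ≤ n := fun hc => hk (hall k hc)
      exact_mod_cast by omega
    refine lt_of_lt_of_le ?_ h2
    exact_mod_cast Nat.lt_succ_self n

lemma lintegral_localTime (hmeas : ∀ n, Measurable (ξ n)) (z' z : ℤ) (S : Set ℤ) :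
    ∫⁻ ω, localTime ξ z' z (exitTime ξ z' S) ω ∂P = ∑' n, P (hitSet ξ z' S n z) := by
  have heq : ∀ ω, localTime ξ z' z (exitTime ξ z' S) ω
      = ∑' n, Set.indicator (hitSet ξ z' S n z) (fun _ => (1 : ℝ≥0∞)) ω := by
    intro ω
    classical
    rw [localTime]
    congr 1
    funext n
    rw [Set.indicator_apply]
    refine if_congr ?_ rfl rfl
    rw [lt_exitTime_iff]
    rfl
  rw [lintegral_congr heq,
    lintegral_tsum (fun n => ((measurable_const : Measurable fun _ : Ω => (1 : ℝ≥0∞)).indicator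
      (measurableSet_hitSet hmeas z' S n z)).aemeasurable)]
  congr 1
  funext n
  exact lintegral_indicator_one (measurableSet_hitSet hmeas z' S n z)


end Stage3

open Stage3 LocalTimeAux Stage2 in
/-- for the lazy walk with parameter `γ` started at
`z' ∈ I = [z₀-d, z₀+d] ⊂ Ĩ = (z₀-h, z₀+h)` with `20(d+1) < h`, for any `z ∈ I`:
`E_{z'}[L^z_{T_Ĩ}] = γ⁻¹ h (1 + φ(z',z))` with `|φ(z',z)| ≤ c d / h`, `c = c(γ)`. -/
theorem expected_local_time_asymptotics (γ : ℝ) (hγ : γ ∈ Set.Ioc (0 : ℝ) 1) :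
    ∃ c > (0 : ℝ), ∀ (Ω : Type) [MeasurableSpace Ω] (P : Measure Ω)
      [IsProbabilityMeasure P] (ξ : ℕ → Ω → ℤ),
      (∀ n, Measurable (ξ n)) →
      iIndepFun ξ P →
      (∀ n, P.map (ξ n) = lazyStep γ) →
      ∀ (z₀ d h z z' : ℤ), 0 < d → 20 * (d + 1) < h →
        z ∈ Set.Icc (z₀ - d) (z₀ + d) → z' ∈ Set.Icc (z₀ - d) (z₀ + d) →
        ∃ φ : ℝ, |φ| ≤ c * (d : ℝ) / (h : ℝ) ∧
          (∫⁻ ω, localTime ξ z' z (exitTime ξ z' (Set.Ioo (z₀ - h) (z₀ + h))) ω ∂P)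
            = ENNReal.ofReal (γ⁻¹ * (h : ℝ) * (1 + φ)) := by
  obtain ⟨hγ0, hγ1⟩ := hγ
  refine ⟨3, by norm_num, ?_⟩
  intro Ω _ P _ ξ hmeas hindep hlaw z₀ d h z z' hd hdh hz hz'
  obtain ⟨hza, hzb'⟩ := hz
  obtain ⟨hz'a, hz'b'⟩ := hz'
  set a : ℤ := z₀ - h with ha
  set b : ℤ := z₀ + h with hb
  have haz : a < z := by omega
  have hzb : z < b := by omega
  have haz' : a < z' := by omega
  have hz'b : z' < b := by omega
  have hab : a < b := by omega
  have hh0 : (0:ℤ) < h := by omega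
  set S : Set ℤ := Set.Ioo a b with hS
  have hz'S : z' ∈ S := ⟨haz', hz'b⟩
  have hhR : (0:ℝ) < (h:ℝ) := by exact_mod_cast hh0
  have hγ2 : (0:ℝ) ≤ γ / 2 := by linarith
  have h1γ : (0:ℝ) ≤ 1 - γ := by linarith
  set f : ℕ → ℤ → ℝ := fun n x => (P (hitSet ξ z' S n x)).toReal with hf
  set g : ℤ → ℝ := greenFn γ a b z with hgdef
  set J : Finset ℤ := Finset.Icc (a - 1) (b + 1) with hJ
  set M : ℕ → ℝ := fun n => ∑ x ∈ J, f n x * g x with hM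
  have hfin : ∀ s : Set Ω, P s ≠ ⊤ := fun s => measure_ne_top P s
  have hfnonneg : ∀ n x, 0 ≤ f n x := fun n x => ENNReal.toReal_nonneg
  have hfsupp : ∀ n : ℕ, ∀ x ∉ S, f n x = 0 := by
    intro n x hx
    simp only [hf]
    rw [hit_not_mem z' S n x hx, measure_empty, ENNReal.toReal_zero]
  have hfrec : ∀ n : ℕ, ∀ y ∈ S,
      f (n+1) y = γ/2 * f n (y-1) + γ/2 * f n (y+1) + (1-γ) * f n y := by
    intro n y hy
    have hrec := hit_succ hmeas hindep hlaw ⟨hγ0, hγ1⟩ z' S n y hy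
    have hne1 : ENNReal.ofReal (γ/2) * P (hitSet ξ z' S n (y-1)) ≠ ⊤ :=
      ENNReal.mul_ne_top ENNReal.ofReal_ne_top (hfin _)
    have hne2 : ENNReal.ofReal (γ/2) * P (hitSet ξ z' S n (y+1)) ≠ ⊤ :=
      ENNReal.mul_ne_top ENNReal.ofReal_ne_top (hfin _)
    have hne3 : ENNReal.ofReal (1-γ) * P (hitSet ξ z' S n y) ≠ ⊤ :=
      ENNReal.mul_ne_top ENNReal.ofReal_ne_top (hfin _)
    simp only [hf]
    rw [hrec, ENNReal.toReal_add (ENNReal.add_ne_top.2 ⟨hne1, hne2⟩) hne3,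
      ENNReal.toReal_add hne1 hne2, ENNReal.toReal_mul, ENNReal.toReal_mul,
      ENNReal.toReal_mul, ENNReal.toReal_ofReal hγ2, ENNReal.toReal_ofReal h1γ]
  have htel : ∀ n, M (n+1) = M n - f n z := by
    intro n
    exact telescope hγ0 haz hzb (f n) (f (n+1)) (hfsupp n) (hfrec n) (hfsupp (n+1))
  have hM0 : M 0 = g z' := by
    have hf0 : ∀ x, f 0 x = if x = z' then 1 else 0 := by
      intro x
      simp only [hf]
      rw [hit_zero z' S hz'S x]
      split_ifs <;> simp
    simp only [hM]
    calc ∑ x ∈ J, f 0 x * g x = ∑ x ∈ J, (if x = z' then g x else 0) := by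
          refine Finset.sum_congr rfl fun x _ => ?_
          rw [hf0 x]
          split_ifs with hxz
          · rw [hxz, one_mul]
          · rw [zero_mul]
      _ = g z' := by
          rw [Finset.sum_ite_eq' J z' g, if_pos (by simp only [hJ, Finset.mem_Icc]; omega)]
  have hsum : ∀ N, ∑ n ∈ Finset.range N, f n z = g z' - M N := by
    intro N
    induction N with
    | zero => simp [hM0]
    | succ k ih => rw [Finset.sum_range_succ, ih, htel k]; ring
  -- decay of the alive mass
  set aSeq : ℕ → ℝ := fun n => (P (aliveSet ξ z' S n)).toReal with haSeq
  have haSeq_nonneg : ∀ n, 0 ≤ aSeq n := fun n => ENNReal.toReal_nonneg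
  have haSeq_anti : Antitone aSeq := by
    apply antitone_nat_of_succ_le
    intro n
    exact ENNReal.toReal_mono (hfin _)
      (measure_mono fun ω hω m hm => hω m (hm.trans (Nat.le_succ n)))
  set K : ℕ := (b - a).toNat with hK
  have hKZ : ((K:ℕ):ℤ) = b - a := Int.toNat_of_nonneg (by omega)
  have hK0 : 0 < K := by omega
  have hts : ∀ n, aSeq (n + K) + aSeq n * (γ/2)^K ≤ aSeq n := by
    intro n
    have hdec := alive_decay hmeas hindep hlaw a b z' n K hab (by omega)
    have h1 := ENNReal.toReal_mono (hfin _) hdec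
    rwa [ENNReal.toReal_add (hfin _)
        (ENNReal.mul_ne_top (hfin _) (ENNReal.pow_ne_top ENNReal.ofReal_ne_top)),
      ENNReal.toReal_mul, ENNReal.toReal_pow, ENNReal.toReal_ofReal hγ2] at h1
  set ρ : ℝ := 1 - (γ/2)^K with hρ
  have hρ0 : 0 ≤ ρ := by
    have : (γ/2)^K ≤ 1 := pow_le_one₀ hγ2 (by linarith)
    simp only [hρ]; linarith
  have hρ1 : ρ < 1 := by
    have : 0 < (γ/2)^K := pow_pos (by linarith) K
    simp only [hρ]; linarith
  have hdecayR : ∀ n, aSeq (n + K) ≤ aSeq n * ρ := by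
    intro n
    have h2 : aSeq n * ρ = aSeq n - aSeq n * ((γ/2)^K) := by rw [hρ]; ring
    rw [h2]
    linarith [hts n]
  have haSeq1 : ∀ n, aSeq n ≤ 1 := by
    intro n
    have h1 : P (aliveSet ξ z' S n) ≤ P Set.univ := measure_mono (Set.subset_univ _)
    have := ENNReal.toReal_mono (hfin _) h1
    rwa [measure_univ, ENNReal.toReal_one] at this
  have hiter : ∀ j : ℕ, aSeq (j * K) ≤ ρ ^ j := by
    intro j
    induction j with
    | zero => simpa using haSeq1 0
    | succ i ih =>
      have h1 : (i + 1) * K = i * K + K := by ring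
      rw [h1, pow_succ]
      calc aSeq (i * K + K) ≤ aSeq (i * K) * ρ := hdecayR (i * K)
        _ ≤ ρ ^ i * ρ := mul_le_mul_of_nonneg_right ih hρ0
  have hsubT : Filter.Tendsto (fun j : ℕ => j * K) Filter.atTop Filter.atTop := by
    apply Filter.tendsto_atTop_atTop_of_monotone (fun i j hij => Nat.mul_le_mul_right K hij)
    intro c
    exact ⟨c, Nat.le_mul_of_pos_right c hK0⟩
  have hbdd : BddBelow (Set.range aSeq) := by
    refine ⟨0, ?_⟩
    rintro x ⟨n, rfl⟩
    exact haSeq_nonneg n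
  have hInf := tendsto_atTop_ciInf haSeq_anti hbdd
  have hsubseq := hInf.comp hsubT
  have hzeroSub : Filter.Tendsto (fun j => aSeq (j * K)) Filter.atTop (nhds 0) :=
    squeeze_zero (fun j => haSeq_nonneg _) hiter
      (tendsto_pow_atTop_nhds_zero_of_lt_one hρ0 hρ1)
  have hInf0 : (⨅ n, aSeq n) = 0 := tendsto_nhds_unique hsubseq hzeroSub
  have haSeq0 : Filter.Tendsto aSeq Filter.atTop (nhds 0) := hInf0 ▸ hInf
  -- M tends to zero
  set C : ℝ := 2 / γ * ((b:ℝ) - (a:ℝ)) with hC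
  have hC0 : 0 ≤ C := by
    have : (a:ℝ) < (b:ℝ) := by exact_mod_cast hab
    have h2 : (0:ℝ) ≤ 2/γ := by positivity
    simp only [hC]
    nlinarith
  have hMnonneg : ∀ n, 0 ≤ M n := fun n =>
    Finset.sum_nonneg fun x _ => mul_nonneg (hfnonneg n x) (greenFn_nonneg haz hzb hγ0 x)
  have hSle : ∀ n, ∑ x ∈ J, f n x ≤ aSeq n := by
    intro n
    have h1 := sum_hit_le (P := P) hmeas z' S n J
    calc ∑ x ∈ J, f n x = (∑ x ∈ J, P (hitSet ξ z' S n x)).toReal :=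
          (ENNReal.toReal_sum fun x _ => hfin _).symm
      _ ≤ aSeq n := ENNReal.toReal_mono (hfin _) h1
  have hMle : ∀ n, M n ≤ aSeq n * C := by
    intro n
    calc M n ≤ ∑ x ∈ J, f n x * C :=
          Finset.sum_le_sum fun x _ =>
            mul_le_mul_of_nonneg_left (greenFn_le haz hzb hγ0 x) (hfnonneg n x)
      _ = (∑ x ∈ J, f n x) * C := (Finset.sum_mul _ _ _).symm
      _ ≤ aSeq n * C := mul_le_mul_of_nonneg_right (hSle n) hC0
  have hMtend : Filter.Tendsto M Filter.atTop (nhds 0) := by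
    apply squeeze_zero hMnonneg hMle
    simpa using haSeq0.mul_const C
  -- sum of the series
  have hpart : ∀ N, ∑ n ∈ Finset.range N, P (hitSet ξ z' S n z)
      = ENNReal.ofReal (g z' - M N) := by
    intro N
    calc ∑ n ∈ Finset.range N, P (hitSet ξ z' S n z)
        = ∑ n ∈ Finset.range N, ENNReal.ofReal (f n z) :=
          Finset.sum_congr rfl fun n _ => (ENNReal.ofReal_toReal (hfin _)).symm
      _ = ENNReal.ofReal (∑ n ∈ Finset.range N, f n z) :=
          (ENNReal.ofReal_sum_of_nonneg fun n _ => hfnonneg n z).symm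
      _ = ENNReal.ofReal (g z' - M N) := by rw [hsum N]
  have hglim : Filter.Tendsto (fun N => g z' - M N) Filter.atTop (nhds (g z')) := by
    simpa using tendsto_const_nhds.sub hMtend
  have hTlim : Filter.Tendsto (fun N => ∑ n ∈ Finset.range N, P (hitSet ξ z' S n z))
      Filter.atTop (nhds (ENNReal.ofReal (g z'))) := by
    simp only [hpart]
    exact ENNReal.tendsto_ofReal hglim
  have htsum : (∑' n, P (hitSet ξ z' S n z)) = ENNReal.ofReal (g z') :=
    tendsto_nhds_unique (ENNReal.tendsto_nat_tsum _) hTlim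
  -- conclusion
  refine ⟨γ * g z' / (h:ℝ) - 1, ?_, ?_⟩
  · -- the quantitative bound
    have hgz' : g z' = 2 / γ * ((min (z':ℝ) (z:ℝ) - (a:ℝ)) * ((b:ℝ) - max (z':ℝ) (z:ℝ)))
        / ((b:ℝ) - (a:ℝ)) := by
      simp only [hgdef]
      rw [greenFn, if_pos ⟨by omega, by omega⟩]
    set mR : ℝ := min (z':ℝ) (z:ℝ) with hmR
    set MR : ℝ := max (z':ℝ) (z:ℝ) with hMR
    have c1 : (z₀:ℝ) - d ≤ (z':ℝ) := by exact_mod_cast hz'a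
    have c2 : (z₀:ℝ) - d ≤ (z:ℝ) := by exact_mod_cast hza
    have c3 : (z':ℝ) ≤ (z₀:ℝ) + d := by exact_mod_cast hz'b'
    have c4 : (z:ℝ) ≤ (z₀:ℝ) + d := by exact_mod_cast hzb'
    have hdR : (1:ℝ) ≤ (d:ℝ) := by exact_mod_cast hd
    have hhd : 20 * ((d:ℝ) + 1) < (h:ℝ) := by exact_mod_cast hdh
    have haR : (a:ℝ) = (z₀:ℝ) - (h:ℝ) := by simp only [ha]; push_cast; ring
    have hbR : (b:ℝ) = (z₀:ℝ) + (h:ℝ) := by simp only [hb]; push_cast; ring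
    have hm1 : (z₀:ℝ) - d ≤ mR := le_min c1 c2
    have hm2 : mR ≤ (z₀:ℝ) + d := (min_le_left _ _).trans c3
    have hM1 : (z₀:ℝ) - d ≤ MR := c1.trans (le_max_left _ _)
    have hM2 : MR ≤ (z₀:ℝ) + d := max_le c3 c4
    have e1 : mR - a ≤ h + d := by rw [haR]; linarith
    have e2 : (h:ℝ) - d ≤ mR - a := by rw [haR]; linarith
    have e3 : (b:ℝ) - MR ≤ h + d := by rw [hbR]; linarith
    have e4 : (h:ℝ) - d ≤ (b:ℝ) - MR := by rw [hbR]; linarith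
    have e5 : (0:ℝ) ≤ h - d := by linarith
    have P1 : (mR - a) * ((b:ℝ) - MR) ≤ ((h:ℝ)+d)*((h:ℝ)+d) :=
      mul_le_mul e1 e3 (by linarith) (by linarith)
    have P2 : ((h:ℝ)-d)*((h:ℝ)-d) ≤ (mR - a) * ((b:ℝ) - MR) :=
      mul_le_mul e2 e4 e5 (by linarith)
    have e6 : (d:ℝ)*d ≤ d*h := by nlinarith
    have key : |(mR - a) * ((b:ℝ) - MR) - h*h| ≤ 3*d*h := by
      rw [abs_le]
      constructor <;> nlinarith
    have hba : (b:ℝ) - a = 2*h := by rw [haR, hbR]; ring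
    have hφeq : γ * g z' / h - 1 = ((mR - a) * ((b:ℝ) - MR) - h*h)/(h*h) := by
      rw [hgz', hba]
      field_simp
    rw [hφeq, abs_div, abs_of_pos (by positivity : (0:ℝ) < (h:ℝ)*(h:ℝ)),
      div_le_div_iff₀ (by positivity) hhR]
    nlinarith [key]
  · -- the identity
    rw [lintegral_localTime hmeas z' z S, htsum]
    congr 1
    field_simp
    ring
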